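/- arXiv:1103.2345 — 2 statements merged into one kernel-verified Lean document; each statement's English description precedes it below -/
import Mathlib

section
/- For the semicircle density ρ_sc with parameter w > 0 and any λ ∈ (−2w, 2w), the principal value integral ∫ ρ_sc(μ)/(μ − λ) dμ equals −λ/(2w²). -/
open MeasureTheory intervalIntegral Filter
open scoped Topology

/-- The semicircle density with parameter `w`. -/
noncomputable def rhoSC (w x : ℝ) : ℝ :=
  (2 * Real.pi * w ^ 2)⁻¹ * Real.sqrt (max 0 (4 * w ^ 2 - x ^ 2))

noncomputable def Dsc (w l x : ℝ) : ℝ :=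
  (2*w)^2 - l*x + Real.sqrt ((2*w)^2 - l^2) * Real.sqrt ((2*w)^2 - x^2)

noncomputable def Fsc (w l x : ℝ) : ℝ :=
  (2 * Real.pi * w ^ 2)⁻¹ * (Real.sqrt ((2*w)^2 - x^2) - l * Real.arcsin (x/(2*w))
    + Real.sqrt ((2*w)^2 - l^2) * (Real.log (x - l) - Real.log (Dsc w l x)))

lemma Dsc_pos (w l x : ℝ) (hw : 0 < w) (hl1 : -(2*w) < l) (hl2 : l < 2*w)
    (hx1 : -(2*w) ≤ x) (hx2 : x ≤ 2*w) : 0 < Dsc w l x := by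
  have h1 : 0 ≤ Real.sqrt ((2*w)^2 - l^2) * Real.sqrt ((2*w)^2 - x^2) := by positivity
  have hax : |x| ≤ 2*w := abs_le.2 ⟨by linarith, hx2⟩
  have hal : |l| < 2*w := abs_lt.2 ⟨hl1, hl2⟩
  have h2 : l*x ≤ |l| * |x| := (le_abs_self _).trans (le_of_eq (abs_mul l x))
  have h3 : l*x < (2*w)^2 := by
    nlinarith [abs_nonneg l, abs_nonneg x, mul_le_mul_of_nonneg_left hax (abs_nonneg l),
      mul_lt_mul_of_pos_right hal (by positivity : (0:ℝ) < 2*w)]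
  unfold Dsc; nlinarith

lemma Fsc_hasDeriv (w l x : ℝ) (hw : 0 < w) (hl1 : -(2*w) < l) (hl2 : l < 2*w)
    (hx1 : -(2*w) < x) (hx2 : x < 2*w) (hxl : x ≠ l) :
    HasDerivAt (Fsc w l) (rhoSC w x / (x - l)) x := by
  set a := 2*w with ha
  have ha0 : 0 < a := by positivity
  have hq2 : a^2 - x^2 > 0 := by nlinarith
  set q := Real.sqrt (a^2 - x^2) with hqdef
  have hq : 0 < q := Real.sqrt_pos.2 hq2
  have hqsq : q^2 = a^2 - x^2 := Real.sq_sqrt hq2.le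
  have hs2 : a^2 - l^2 > 0 := by nlinarith
  set s := Real.sqrt (a^2 - l^2) with hsdef
  have hs : 0 < s := Real.sqrt_pos.2 hs2
  have hssq : s^2 = a^2 - l^2 := Real.sq_sqrt hs2.le
  have hDpos : 0 < Dsc w l x := Dsc_pos w l x hw hl1 hl2 hx1.le hx2.le
  have hDval : Dsc w l x = a^2 - l*x + s*q := rfl
  -- derivative of sqrt(a^2 - x^2)
  have hu : HasDerivAt (fun y : ℝ => a^2 - y^2) (-(2*x)) x := by
    simpa using (hasDerivAt_pow 2 x).const_sub (a^2)
  have h1 : HasDerivAt (fun y : ℝ => Real.sqrt (a^2 - y^2)) (-x / q) x := by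
    have := (Real.hasDerivAt_sqrt hq2.ne').comp x hu
    convert this using 1 <;> try rfl
    field_simp
    ring
  -- derivative of arcsin(x/a)
  have h2 : HasDerivAt (fun y : ℝ => Real.arcsin (y/a)) (1/q) x := by
    have hne1 : x/a ≠ -1 := by
      intro h; rw [div_eq_iff ha0.ne'] at h; nlinarith
    have hne2 : x/a ≠ 1 := by
      intro h; rw [div_eq_iff ha0.ne'] at h; nlinarith
    have hin : HasDerivAt (fun y : ℝ => y / a) (1/a) x := by
      simpa using (hasDerivAt_id x).div_const a
    have := (Real.hasDerivAt_arcsin hne1 hne2).comp x hin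
    convert this using 1 <;> try rfl
    have : 1 - (x/a)^2 = (a^2 - x^2)/a^2 := by field_simp
    rw [this, Real.sqrt_div hq2.le, Real.sqrt_sq ha0.le]
    rw [← hqdef]
    field_simp
  -- derivative of log(x - l)
  have h3 : HasDerivAt (fun y : ℝ => Real.log (y - l)) ((x - l)⁻¹) x := by
    have := (Real.hasDerivAt_log (sub_ne_zero.2 hxl)).comp x ((hasDerivAt_id x).sub_const l)
    convert this using 1 <;> first | rfl | simp
  -- derivative of D
  have hD : HasDerivAt (Dsc w l) (-l + s * (-x / q)) x := by
    have : HasDerivAt (fun y : ℝ => a^2 - l*y + s * Real.sqrt (a^2 - y^2))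
        (-l + s * (-x / q)) x := by
      have hlin : HasDerivAt (fun y : ℝ => a^2 - l*y) (-l) x := by
        simpa using ((hasDerivAt_id x).const_mul l).const_sub (a^2)
      exact hlin.add (h1.const_mul s)
    exact this
  have h4 : HasDerivAt (fun y : ℝ => Real.log (Dsc w l y))
      ((Dsc w l x)⁻¹ * (-l + s * (-x / q))) x :=
    (Real.hasDerivAt_log hDpos.ne').comp x hD
  have hmain : HasDerivAt (Fsc w l)
      ((2 * Real.pi * w ^ 2)⁻¹ * ((-x/q - l * (1/q)) + s * ((x-l)⁻¹ - (Dsc w l x)⁻¹ * (-l + s * (-x / q))))) x := by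
    exact ((h1.sub (h2.const_mul l)).add ((h3.sub h4).const_mul s)).const_mul _
  convert hmain using 1
  have hrho : rhoSC w x = (2 * Real.pi * w ^ 2)⁻¹ * q := by
    unfold rhoSC
    congr 1
    rw [max_eq_right (by nlinarith)]
    congr 1
    nlinarith
  rw [hrho, hDval]
  have hxl' : x - l ≠ 0 := sub_ne_zero.2 hxl
  have hD' : a^2 - l*x + s*q ≠ 0 := by rw [← hDval]; exact hDpos.ne'
  rw [mul_div_assoc]
  congr 1
  have key : (x-l)⁻¹ - (a^2 - l*x + s*q)⁻¹ * (-l + s * (-x / q)) = s/((x-l)*q) := by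
    have hD'' : a^2 - x*l + s*q ≠ 0 := by rw [mul_comm x l]; exact hD'
    field_simp
    linear_combination s * hqsq - q * hssq
  rw [key]
  field_simp
  linear_combination hqsq - hssq

lemma rhoSC_continuous (w : ℝ) : Continuous (rhoSC w) := by
  unfold rhoSC
  exact continuous_const.mul (Real.continuous_sqrt.comp
    (continuous_const.max (continuous_const.sub (continuous_pow 2))))

lemma Dsc_continuous (w l : ℝ) : Continuous (Dsc w l) := by
  unfold Dsc
  exact (continuous_const.sub (continuous_const.mul continuous_id)).add
    (continuous_const.mul (Real.continuous_sqrt.comp (continuous_const.sub (continuous_pow 2))))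

lemma Fsc_contOn (w l : ℝ) (hw : 0 < w) (hl1 : -(2*w) < l) (hl2 : l < 2*w) :
    ContinuousOn (Fsc w l) (Set.Icc (-(2*w)) (2*w) \ {l}) := by
  unfold Fsc
  apply ContinuousOn.mul continuousOn_const
  apply ContinuousOn.add
  · exact ((Real.continuous_sqrt.comp (continuous_const.sub (continuous_pow 2))).continuousOn).sub
      (continuousOn_const.mul ((Real.continuous_arcsin.comp (continuous_id.div_const _)).continuousOn))
  · apply ContinuousOn.mul continuousOn_const
    apply ContinuousOn.sub
    · apply ContinuousOn.log ((continuous_id.sub continuous_const).continuousOn)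
      intro x hx
      have : x ≠ l := by
        intro h; exact hx.2 (by simp [h])
      exact sub_ne_zero.2 this
    · apply ContinuousOn.log (Dsc_continuous w l).continuousOn
      intro x hx
      exact (Dsc_pos w l x hw hl1 hl2 hx.1.1 hx.1.2).ne'

lemma Fsc_endpoints (w l : ℝ) (hw : 0 < w) (hl1 : -(2*w) < l) (hl2 : l < 2*w) :
    Fsc w l (2*w) - Fsc w l (-(2*w)) = -l / (2 * w^2) := by
  have ha0 : (0:ℝ) < 2*w := by positivity
  have h1 : Real.sqrt ((2*w)^2 - (2*w)^2) = 0 := by simp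
  have h2 : Real.sqrt ((2*w)^2 - (-(2*w))^2) = 0 := by simp
  have h3 : (2*w)/(2*w) = 1 := div_self ha0.ne'
  have h4 : (-(2*w))/(2*w) = -1 := by rw [neg_div, h3]
  have hD1 : Dsc w l (2*w) = (2*w) * ((2*w) - l) := by
    unfold Dsc; rw [h1]; ring
  have hD2 : Dsc w l (-(2*w)) = (2*w) * ((2*w) + l) := by
    unfold Dsc; rw [h2]; ring
  have hlog1 : Real.log (Dsc w l (2*w)) = Real.log (2*w) + Real.log ((2*w) - l) := by
    rw [hD1, Real.log_mul ha0.ne' (by linarith)]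
  have hlog2 : Real.log (Dsc w l (-(2*w))) = Real.log (2*w) + Real.log ((2*w) + l) := by
    rw [hD2, Real.log_mul ha0.ne' (by linarith)]
  have hlogneg : Real.log (-(2*w) - l) = Real.log ((2*w) + l) := by
    rw [show -(2*w) - l = -((2*w) + l) by ring, Real.log_neg_eq_log]
  unfold Fsc
  rw [h1, h2, h3, h4, Real.arcsin_one, Real.arcsin_neg_one, hlog1, hlog2, hlogneg]
  have hpi : Real.pi ≠ 0 := Real.pi_ne_zero
  field_simp
  ring


/-- The principal value of `∫ ρ_sc(μ)/(μ − λ) dμ` equals `−λ/(2w²)` for `λ ∈ (−2w, 2w)`. -/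
theorem semicircle_principal_value (w : ℝ) (hw : 0 < w) (l : ℝ)
    (hl : l ∈ Set.Ioo (-(2 * w)) (2 * w)) :
    Tendsto (fun ε : ℝ =>
        (∫ x in (-(2 * w))..(l - ε), rhoSC w x / (x - l)) +
          ∫ x in (l + ε)..(2 * w), rhoSC w x / (x - l))
      (𝓝[>] 0) (𝓝 (-l / (2 * w ^ 2))) := by
  obtain ⟨hl1, hl2⟩ := hl
  have hl1 : -(2*w) < l := by linarith
  have hl2 : l < 2*w := by linarith
  set δ := min (l + 2*w) (2*w - l) with hδdef
  have hδ : 0 < δ := lt_min (by linarith) (by linarith)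
  set c := (2 * Real.pi * w ^ 2)⁻¹ with hc
  set s := Real.sqrt ((2*w)^2 - l^2) with hs
  set Φ : ℝ → ℝ := fun ε => c * ((Real.sqrt ((2*w)^2 - (l-ε)^2) - Real.sqrt ((2*w)^2 - (l+ε)^2))
     - l * (Real.arcsin ((l-ε)/(2*w)) - Real.arcsin ((l+ε)/(2*w)))
     + s * (Real.log (Dsc w l (l+ε)) - Real.log (Dsc w l (l-ε)))) + (-l/(2*w^2)) with hΦdef
  have hEq : ∀ ε ∈ Set.Ioo (0:ℝ) δ,
      ((∫ x in (-(2*w))..(l-ε), rhoSC w x / (x - l)) + ∫ x in (l+ε)..(2*w), rhoSC w x / (x - l))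
        = Φ ε := by
    rintro ε ⟨hε0, hεδ⟩
    have hε1 : ε < l + 2*w := lt_of_lt_of_le hεδ (min_le_left _ _)
    have hε2 : ε < 2*w - l := lt_of_lt_of_le hεδ (min_le_right _ _)
    have hab1 : -(2*w) ≤ l - ε := by linarith
    have hab2 : l + ε ≤ 2*w := by linarith
    have hI1 : ∫ x in (-(2*w))..(l-ε), rhoSC w x / (x - l) = Fsc w l (l-ε) - Fsc w l (-(2*w)) := by
      apply intervalIntegral.integral_eq_sub_of_hasDeriv_right_of_le hab1
      · exact (Fsc_contOn w l hw hl1 hl2).mono (fun x hx => ⟨⟨hx.1, by linarith [hx.2]⟩,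
          by simp only [Set.mem_singleton_iff]; intro h; rw [h] at hx; linarith [hx.2]⟩)
      · intro x hx
        exact (Fsc_hasDeriv w l x hw hl1 hl2 hx.1 (by linarith [hx.2])
          (by intro h; rw [h] at hx; linarith [hx.2])).hasDerivWithinAt
      · apply ContinuousOn.intervalIntegrable
        rw [Set.uIcc_of_le hab1]
        exact ((rhoSC_continuous w).continuousOn.div
          ((continuous_id.sub continuous_const).continuousOn)
          (fun x hx => sub_ne_zero.2 (by intro h; rw [h] at hx; linarith [hx.2])))
    have hI2 : ∫ x in (l+ε)..(2*w), rhoSC w x / (x - l) = Fsc w l (2*w) - Fsc w l (l+ε) := by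
      apply intervalIntegral.integral_eq_sub_of_hasDeriv_right_of_le hab2
      · exact (Fsc_contOn w l hw hl1 hl2).mono (fun x hx => ⟨⟨by linarith [hx.1], hx.2⟩,
          by simp only [Set.mem_singleton_iff]; intro h; rw [h] at hx; linarith [hx.1]⟩)
      · intro x hx
        exact (Fsc_hasDeriv w l x hw hl1 hl2 (by linarith [hx.1]) hx.2
          (by intro h; rw [h] at hx; linarith [hx.1])).hasDerivWithinAt
      · apply ContinuousOn.intervalIntegrable
        rw [Set.uIcc_of_le hab2]
        exact ((rhoSC_continuous w).continuousOn.div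
          ((continuous_id.sub continuous_const).continuousOn)
          (fun x hx => sub_ne_zero.2 (by intro h; rw [h] at hx; linarith [hx.1])))
    rw [hI1, hI2]
    have hend : Fsc w l (2*w) - Fsc w l (-(2*w)) = -l / (2 * w^2) :=
      Fsc_endpoints w l hw hl1 hl2
    have hlog : Real.log (l - ε - l) = Real.log (l + ε - l) := by
      rw [show l - ε - l = -ε by ring, show l + ε - l = ε by ring, Real.log_neg_eq_log]
    have hsum : (Fsc w l (l-ε) - Fsc w l (-(2*w))) + (Fsc w l (2*w) - Fsc w l (l+ε))
        = (Fsc w l (l-ε) - Fsc w l (l+ε)) + (Fsc w l (2*w) - Fsc w l (-(2*w))) := by ring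
    rw [hsum, hend, hΦdef]
    show (Fsc w l (l-ε) - Fsc w l (l+ε)) + (-l / (2*w^2)) = _
    unfold Fsc
    rw [hlog]
    ring
  have hDl : Dsc w l l ≠ 0 := (Dsc_pos w l l hw hl1 hl2 hl1.le hl2.le).ne'
  have hΦcont : ContinuousAt Φ 0 := by
    rw [hΦdef]
    have hsub : Continuous (fun ε : ℝ => l - ε) := continuous_const.sub continuous_id
    have hadd : Continuous (fun ε : ℝ => l + ε) := continuous_const.add continuous_id
    have h1 : Continuous (fun ε : ℝ => Real.sqrt ((2*w)^2 - (l-ε)^2)) :=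
      Real.continuous_sqrt.comp (continuous_const.sub (hsub.pow 2))
    have h2 : Continuous (fun ε : ℝ => Real.sqrt ((2*w)^2 - (l+ε)^2)) :=
      Real.continuous_sqrt.comp (continuous_const.sub (hadd.pow 2))
    have h3 : Continuous (fun ε : ℝ => Real.arcsin ((l-ε)/(2*w))) :=
      Real.continuous_arcsin.comp (hsub.div_const _)
    have h4 : Continuous (fun ε : ℝ => Real.arcsin ((l+ε)/(2*w))) :=
      Real.continuous_arcsin.comp (hadd.div_const _)
    have h5 : ContinuousAt (fun ε : ℝ => Real.log (Dsc w l (l+ε))) 0 := by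
      apply ContinuousAt.comp (Real.continuousAt_log (by simpa using hDl))
      exact ((Dsc_continuous w l).continuousAt).comp hadd.continuousAt
    have h6 : ContinuousAt (fun ε : ℝ => Real.log (Dsc w l (l-ε))) 0 := by
      apply ContinuousAt.comp (Real.continuousAt_log (by simpa using hDl))
      exact ((Dsc_continuous w l).continuousAt).comp hsub.continuousAt
    exact ((continuousAt_const.mul (((h1.continuousAt.sub h2.continuousAt).sub
      (continuousAt_const.mul (h3.continuousAt.sub h4.continuousAt))).add
      (continuousAt_const.mul (h5.sub h6)))).add continuousAt_const)
  have hΦ0 : Φ 0 = -l / (2 * w ^ 2) := by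
    rw [hΦdef]
    simp
  have hT : Tendsto Φ (𝓝[>] 0) (𝓝 (-l / (2 * w ^ 2))) := by
    rw [← hΦ0]
    exact hΦcont.continuousWithinAt.tendsto
  apply hT.congr'
  filter_upwards [Ioo_mem_nhdsGT_of_mem (Set.mem_Ico.2 ⟨le_refl 0, hδ⟩)] with ε hε
  exact (hEq ε hε).symm
end

section
/- Derivative formula for matrix exponential entries: for an n×n real symmetric matrix M, U(t) = e^{itM}, and the partial derivative D_{jk} = ∂/∂M_{jk} (treating M_{jk} = M_{kj} as a single variable for j ≠ k), one has D_{jk} U_{ab}(t) = i β_{jk} [(U_{aj} ∗ U_{bk})(t) + (U_{bj} ∗ U_{ak})(t)], where β_{jk} = (1 + δ_{jk})^{-1} and (f∗g)(t) = ∫₀ᵗ f(t−s)g(s) ds. -/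
open MeasureTheory intervalIntegral

/-- `U(t) = e^{itM}` for a real matrix `M`, as a complex matrix. -/
noncomputable def Ut {n : ℕ} (M : Matrix (Fin n) (Fin n) ℝ) (t : ℝ) :
    Matrix (Fin n) (Fin n) ℂ :=
  NormedSpace.exp ((Complex.I * t) • M.map Complex.ofReal)

/-- The direction matrix of the derivative `D_{jk} = ∂/∂M_{jk}`, treating
`M_{jk} = M_{kj}` as a single variable for `j ≠ k`. -/
noncomputable def symmDir {n : ℕ} (j k : Fin n) : Matrix (Fin n) (Fin n) ℝ :=
  Matrix.single j k 1 + if j = k then 0 else Matrix.single k j 1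

section BanachDuhamel
open NormedSpace

variable {𝔸 : Type*} [NormedRing 𝔸] [NormedAlgebra ℝ 𝔸] [CompleteSpace 𝔸]

lemma cont3 (X Y B : 𝔸) :
    Continuous fun s : ℝ => exp (s • Y) * B * exp ((1 - s) • X) := by
  refine Continuous.mul (Continuous.mul ?_ continuous_const) ?_
  · letI : NormedAlgebra ℚ 𝔸 := NormedAlgebra.restrictScalars ℚ ℝ 𝔸
    exact exp_continuous.comp (continuous_id.smul continuous_const)
  · letI : NormedAlgebra ℚ 𝔸 := NormedAlgebra.restrictScalars ℚ ℝ 𝔸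
    exact exp_continuous.comp ((continuous_const.sub continuous_id).smul continuous_const)

lemma phi_deriv (X Y : 𝔸) (s : ℝ) :
    HasDerivAt (fun u : ℝ => exp (u • Y) * exp ((1 - u) • X))
      (exp (s • Y) * (Y - X) * exp ((1 - s) • X)) s := by
  have h1 : HasDerivAt (fun u : ℝ => exp (u • Y)) (exp (s • Y) * Y) s :=
    hasDerivAt_exp_smul_const Y s
  have h3 : HasDerivAt (fun u : ℝ => (1 : ℝ) - u) (-1) s := by
    simpa using (hasDerivAt_id s).const_sub 1
  have h4 : HasDerivAt (fun u : ℝ => exp ((1 - u) • X))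
      (-(X * exp ((1 - s) • X))) s := by
    have := (hasDerivAt_exp_smul_const' X (1 - s)).scomp s h3
    simpa [Function.comp_def] using this
  have := h1.mul h4
  convert this using 1
  noncomm_ring
  noncomm_ring

lemma duhamel (X Y : 𝔸) :
    exp Y - exp X
      = ∫ s in (0:ℝ)..1, exp (s • Y) * (Y - X) * exp ((1 - s) • X) := by
  have h := intervalIntegral.integral_eq_sub_of_hasDerivAt
    (f := fun u : ℝ => exp (u • Y) * exp ((1 - u) • X))
    (fun s _ => phi_deriv X Y s) ((cont3 X Y (Y - X)).intervalIntegrable 0 1)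
  rw [h]
  simp [exp_zero]

lemma hasDerivAt_exp_perturb (A B : 𝔸) :
    HasDerivAt (fun x : ℝ => exp (A + x • B))
      (∫ s in (0:ℝ)..1, exp (s • A) * B * exp ((1 - s) • A)) 0 := by
  set G : ℝ → 𝔸 :=
    fun x => ∫ s in (0:ℝ)..1, exp (s • (A + x • B)) * B * exp ((1 - s) • A) with hGdef
  have hGcont : Continuous G := by
    apply intervalIntegral.continuous_parametric_intervalIntegral_of_continuous'
    show Continuous fun p : ℝ × ℝ => exp (p.2 • (A + p.1 • B)) * B * exp ((1 - p.2) • A)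
    refine Continuous.mul (Continuous.mul ?_ continuous_const) ?_
    · letI : NormedAlgebra ℚ 𝔸 := NormedAlgebra.restrictScalars ℚ ℝ 𝔸
      exact exp_continuous.comp
        (continuous_snd.smul (continuous_const.add (continuous_fst.smul continuous_const)))
    · letI : NormedAlgebra ℚ 𝔸 := NormedAlgebra.restrictScalars ℚ ℝ 𝔸
      exact exp_continuous.comp
        ((continuous_const.sub continuous_snd).smul continuous_const)
  have key : ∀ x : ℝ, exp (A + x • B) - exp A = x • G x := by
    intro x
    have h := duhamel A (A + x • B)
    simp only [add_sub_cancel_left] at h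
    rw [h, hGdef, ← intervalIntegral.integral_smul]
    apply intervalIntegral.integral_congr
    intro s _
    simp [mul_smul_comm, smul_mul_assoc]
  have hG0 : G 0 = ∫ s in (0:ℝ)..1, exp (s • A) * B * exp ((1 - s) • A) := by
    simp [hGdef]
  rw [hasDerivAt_iff_tendsto_slope]
  have hslope : ∀ᶠ x in nhdsWithin (0:ℝ) {(0:ℝ)}ᶜ,
      G x = slope (fun x : ℝ => exp (A + x • B)) 0 x := by
    filter_upwards [self_mem_nhdsWithin] with x hx
    have hx0 : (x : ℝ) ≠ 0 := hx
    rw [slope_def_module]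
    simp only [sub_zero, zero_smul, add_zero]
    rw [key x, smul_smul, inv_mul_cancel₀ hx0, one_smul]
  refine Filter.Tendsto.congr' hslope ?_
  rw [← hG0]
  exact (hGcont.tendsto 0).mono_left nhdsWithin_le_nhds

end BanachDuhamel

lemma triple_entry {n : ℕ} (P Q : Matrix (Fin n) (Fin n) ℂ) (j k a b : Fin n) :
    (P * (Matrix.single j k 1 : Matrix (Fin n) (Fin n) ℂ) * Q) a b = P a j * Q k b := by
  rw [Matrix.mul_assoc, Matrix.mul_apply]
  rw [Finset.sum_eq_single j]
  · simp
  · intro p _ hp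
    rw [Matrix.single_mul_apply_of_ne (h := hp), mul_zero]
  · simp

lemma conv_var (f g : ℝ → ℂ) (t : ℝ) :
    (t : ℂ) * ∫ s in (0:ℝ)..1, f (s * t) * g ((1 - s) * t)
      = ∫ u in (0:ℝ)..t, f (t - u) * g u := by
  rcases eq_or_ne t 0 with rfl | ht
  · simp
  · have h1 : (∫ s in (0:ℝ)..1, f (s * t) * g ((1 - s) * t))
        = ∫ s in (0:ℝ)..1, (fun u => f u * g (t - u)) (s * t) := by
      apply intervalIntegral.integral_congr
      intro s _
      have : (1 - s) * t = t - s * t := by ring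
      simp [this]
    rw [h1, intervalIntegral.integral_comp_mul_right (fun u => f u * g (t - u)) ht]
    simp only [zero_mul, one_mul]
    have h2 : (∫ u in (0:ℝ)..t, f u * g (t - u)) = ∫ u in (0:ℝ)..t, f (t - u) * g u := by
      have := intervalIntegral.integral_comp_sub_left
        (fun u => f (t - u) * g u) t (a := 0) (b := t)
      simp only [sub_self, sub_zero, sub_sub_cancel] at this
      rw [← this]
    rw [← h2, Complex.real_smul]
    rw [← mul_assoc, ← Complex.ofReal_mul, mul_inv_cancel₀ ht]
    simp

lemma reflect_conv (f g : ℝ → ℂ) (t : ℝ) :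
    (∫ u in (0:ℝ)..t, f (t - u) * g u) = ∫ u in (0:ℝ)..t, g (t - u) * f u := by
  have := intervalIntegral.integral_comp_sub_left
    (fun u => g (t - u) * f u) t (a := 0) (b := t)
  simp only [sub_self, sub_zero, sub_sub_cancel] at this
  rw [← this]
  apply intervalIntegral.integral_congr
  intro s _
  ring

/-- Derivative formula for matrix exponential entries:
`D_{jk} U_{ab}(t) = i β_{jk} [(U_{aj} ∗ U_{bk})(t) + (U_{bj} ∗ U_{ak})(t)]`
with `β_{jk} = (1 + δ_{jk})⁻¹` and `(f∗g)(t) = ∫₀ᵗ f(t−s)g(s) ds`. -/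
theorem deriv_exp_entry_symm {n : ℕ} (M : Matrix (Fin n) (Fin n) ℝ) (hM : M.IsSymm)
    (j k a b : Fin n) (t : ℝ) :
    HasDerivAt (fun x : ℝ => Ut (M + x • symmDir j k) t a b)
      (Complex.I * (if j = k then (2 : ℂ)⁻¹ else 1) *
        ((∫ s in (0:ℝ)..t, Ut M (t - s) a j * Ut M s b k) +
          ∫ s in (0:ℝ)..t, Ut M (t - s) b j * Ut M s a k)) 0 := by
  letI : NormedRing (Matrix (Fin n) (Fin n) ℂ) := Matrix.linftyOpNormedRing
  letI : NormedAlgebra ℝ (Matrix (Fin n) (Fin n) ℂ) := Matrix.linftyOpNormedAlgebra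
  letI : CompleteSpace (Matrix (Fin n) (Fin n) ℂ) := FiniteDimensional.complete ℝ _
  letI : NormedAlgebra ℂ (Matrix (Fin n) (Fin n) ℂ) := Matrix.linftyOpNormedAlgebra
  letI : NormedAlgebra ℚ (Matrix (Fin n) (Fin n) ℂ) := NormedAlgebra.restrictScalars ℚ ℝ _
  set S : Matrix (Fin n) (Fin n) ℝ := symmDir j k with hS
  set Mc : Matrix (Fin n) (Fin n) ℂ := M.map Complex.ofReal with hMc
  set A : Matrix (Fin n) (Fin n) ℂ := (Complex.I * t) • Mc with hA
  set Bc : Matrix (Fin n) (Fin n) ℂ := (Complex.I * t) • (S.map Complex.ofReal) with hBc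
  have hUt : ∀ (N : Matrix (Fin n) (Fin n) ℝ) (u : ℝ),
      Ut N u = NormedSpace.exp ((Complex.I * u) • N.map Complex.ofReal) := by
    intro N u
    rw [Ut]
  have hfun : ∀ x : ℝ, Ut (M + x • S) t = NormedSpace.exp (A + x • Bc) := by
    intro x
    rw [hUt]
    congr 1
    ext i i'
    simp only [hA, hBc, hMc, Matrix.add_apply, Matrix.smul_apply, Matrix.map_apply,
      Complex.real_smul, smul_eq_mul]
    push_cast
    ring
  have expU : ∀ s : ℝ, NormedSpace.exp (s • A) = Ut M (s * t) := by
    intro s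
    rw [hUt]
    congr 1
    ext i i'
    simp only [hA, Matrix.smul_apply, Complex.real_smul, smul_eq_mul]
    push_cast
    ring
  -- symmetry of Ut M
  have hMcsymm : Mc.IsSymm := by
    rw [Matrix.IsSymm, hMc, ← Matrix.transpose_map]
    exact congrArg (fun X => Matrix.map X Complex.ofReal) hM
  have hsym : ∀ (u : ℝ) (p q : Fin n), Ut M u p q = Ut M u q p := by
    intro u p q
    have h1 : ((Complex.I * u) • Mc).IsSymm := by
      rw [Matrix.IsSymm, Matrix.transpose_smul, hMcsymm]
    have h2 : (Ut M u).IsSymm := by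
      rw [Ut]
      exact Matrix.IsSymm.exp h1
    exact Matrix.IsSymm.apply h2 q p
  have hUtc : ∀ p q : Fin n, Continuous fun u : ℝ => Ut M u p q := by
    intro p q
    have : Continuous fun u : ℝ => Ut M u := by
      simp only [hUt]
      exact NormedSpace.exp_continuous.comp
        ((continuous_const.mul Complex.continuous_ofReal).smul continuous_const)
    exact this.matrix_elem p q
  -- the entry continuous linear map
  let e : Matrix (Fin n) (Fin n) ℂ →ₗ[ℝ] ℂ :=
    { toFun := fun P => P a b
      map_add' := fun P Q => rfl
      map_smul' := fun c P => rfl }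
  let ec : Matrix (Fin n) (Fin n) ℂ →L[ℝ] ℂ := LinearMap.toContinuousLinearMap e
  have hD := hasDerivAt_exp_perturb A Bc
  have hDe := ec.hasFDerivAt.comp_hasDerivAt 0 hD
  have hmain : HasDerivAt (fun x : ℝ => Ut (M + x • S) t a b)
      (ec (∫ s in (0:ℝ)..1,
        NormedSpace.exp (s • A) * Bc * NormedSpace.exp ((1 - s) • A))) 0 := by
    have hfg : (fun x : ℝ => Ut (M + x • S) t a b)
        = fun x : ℝ => ec (NormedSpace.exp (A + x • Bc)) := by
      funext x
      rw [hfun x]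
      rfl
    rw [hfg]
    exact hDe
  convert hmain using 1
  -- now compute the value
  letI : ENormedAddMonoid (Matrix (Fin n) (Fin n) ℂ) :=
    NormedAddCommGroup.toENormedAddCommMonoid.toENormedAddMonoid
  have hInt : IntervalIntegrable
      (fun s : ℝ => NormedSpace.exp (s • A) * Bc * NormedSpace.exp ((1 - s) • A))
      volume 0 1 := (cont3 A A Bc).intervalIntegrable 0 1
  refine Eq.trans ?_ (ContinuousLinearMap.intervalIntegral_comp_comm ec hInt)
  have hentry : ∀ s : ℝ,
      ec (NormedSpace.exp (s • A) * Bc * NormedSpace.exp ((1 - s) • A))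
        = Complex.I * t * (Ut M (s * t) a j * Ut M ((1 - s) * t) b k
            + if j = k then 0 else Ut M (s * t) a k * Ut M ((1 - s) * t) b j) := by
    intro s
    have hSmap : S.map Complex.ofReal
        = (Matrix.single j k 1 : Matrix (Fin n) (Fin n) ℂ)
          + if j = k then 0 else Matrix.single k j 1 := by
      ext i i'
      simp only [hS, symmDir, Matrix.map_apply, Matrix.add_apply, Matrix.single]
      by_cases h : j = k <;>
        simp [h, Matrix.of_apply, apply_ite Complex.ofReal, Matrix.zero_apply]
    show (NormedSpace.exp (s • A) * Bc * NormedSpace.exp ((1 - s) • A)) a b = _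
    rw [hBc, hSmap, expU s, expU (1 - s)]
    rw [smul_add, mul_add, add_mul, Matrix.add_apply]
    rw [mul_smul_comm, smul_mul_assoc, Matrix.smul_apply, smul_eq_mul, triple_entry]
    by_cases h : j = k
    · simp only [h, eq_self_iff_true, if_true, smul_zero, Matrix.mul_zero, Matrix.zero_mul,
        Matrix.zero_apply, add_zero]
      rw [hsym ((1 - s) * t) k b]
    · simp only [if_neg h]
      rw [mul_smul_comm, smul_mul_assoc, Matrix.smul_apply, smul_eq_mul, triple_entry]
      rw [hsym ((1 - s) * t) k b, hsym ((1 - s) * t) j b]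
      ring
  refine Eq.trans ?_ (intervalIntegral.integral_congr (fun s _ => hentry s)).symm
  have hintc : ∀ p q p' q' : Fin n, IntervalIntegrable
      (fun s : ℝ => Ut M (s * t) p q * Ut M ((1 - s) * t) p' q') volume 0 1 := by
    intro p q p' q'
    exact (((hUtc p q).comp (continuous_id.mul continuous_const)).mul
      ((hUtc p' q').comp ((continuous_const.sub continuous_id).mul
        continuous_const))).intervalIntegrable 0 1
  by_cases h : j = k
  · subst h
    simp only [eq_self_iff_true, if_true, add_zero]
    rw [intervalIntegral.integral_const_mul]
    have hc := conv_var (fun u => Ut M u a j) (fun u => Ut M u b j) t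
    have hr := reflect_conv (fun u => Ut M u b j) (fun u => Ut M u a j) t
    rw [hr, ← hc]
    ring
  · simp only [if_neg h]
    rw [intervalIntegral.integral_const_mul,
      intervalIntegral.integral_add (hintc a j b k) (hintc a k b j)]
    have hc1 := conv_var (fun u => Ut M u a j) (fun u => Ut M u b k) t
    have hc2 := conv_var (fun u => Ut M u a k) (fun u => Ut M u b j) t
    have hr2 := reflect_conv (fun u => Ut M u b j) (fun u => Ut M u a k) t
    rw [hr2, ← hc1, ← hc2]
    ring
end
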